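/- arXiv:0907.4592 — 2 statements merged into one kernel-verified Lean document; each statement's English description precedes it below -/
import Mathlib

section
/- Under hypotheses (H0)-(H3), the convergence norm satisfies the upper bound ρ(P) ≤ inf_{a ∈ ℝ^d} max(φ(a), φ₀(a)). -/
open scoped Classical BigOperators
open Filter

noncomputable section

namespace RWHalfspace

/-- `ℤ^d` modeled as `ℤ^{d-1} × ℤ`; the Lean parameter `d` is the paper's `d-1`,
so that the paper's hypothesis `d ≥ 1` is automatic. -/
abbrev Zd (d : ℕ) := (Fin d → ℤ) × ℤ
/-- The state space `E = ℤ^{d-1} × ℕ`. -/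
abbrev Ed (d : ℕ) := (Fin d → ℤ) × ℕ
/-- `ℝ^d` modeled as `ℝ^{d-1} × ℝ`. -/
abbrev Rd (d : ℕ) := (Fin d → ℝ) × ℝ

variable {d : ℕ}

/-- The scalar product `a · z` for `a ∈ ℝ^d`, `z ∈ ℤ^d`. -/
def dotZ (a : Rd d) (z : Zd d) : ℝ := (∑ i, a.1 i * (z.1 i : ℝ)) + a.2 * (z.2 : ℝ)

/-- The scalar product on `ℝ^d`. -/
def dotR (a b : Rd d) : ℝ := (∑ i, a.1 i * b.1 i) + a.2 * b.2

/-- The scalar product `a · z` for `a ∈ ℝ^d`, `z ∈ E = ℤ^{d-1} × ℕ`. -/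
def dotE (a : Rd d) (z : Ed d) : ℝ := (∑ i, a.1 i * (z.1 i : ℝ)) + a.2 * (z.2 : ℝ)

/-- The jump generating function `φ(a) = ∑_{z ∈ ℤ^d} μ(z) e^{a·z}`. -/
def phi (μ : Zd d → ℝ) (a : Rd d) : ℝ := ∑' z, μ z * Real.exp (dotZ a z)

/-- The difference `z' - z ∈ ℤ^d` of two points of `E`. -/
def jump (z z' : Ed d) : Zd d := (z'.1 - z.1, (z'.2 : ℤ) - (z.2 : ℤ))

/-- The transition kernel of the reflected random walk on `E = ℤ^{d-1} × ℕ`. -/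
def ker (μ μ₀ : Zd d → ℝ) (z z' : Ed d) : ℝ :=
  if z.2 = 0 then μ₀ (jump z z') else μ (jump z z')

/-- The `n`-step transition kernel `p^(n)`. -/
def kerN (μ μ₀ : Zd d → ℝ) : ℕ → Ed d → Ed d → ℝ
  | 0 => fun z z' => if z = z' then 1 else 0
  | n + 1 => fun z z' => ∑' w, kerN μ μ₀ n z w * ker μ μ₀ w z'

/-- The `n`-step kernel of the homogeneous random walk on `ℤ^d` with step distribution `μ`. -/
def homN (μ : Zd d → ℝ) : ℕ → Zd d → Zd d → ℝ
  | 0 => fun z z' => if z = z' then 1 else 0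
  | n + 1 => fun z z' => ∑' w, homN μ n z w * μ (z' - w)

/-- The step distribution of the last coordinate of the homogeneous random walk. -/
def lastStep (μ : Zd d → ℝ) (k : ℤ) : ℝ := ∑' x : Fin d → ℤ, μ (x, k)

/-- The `n`-step kernel of the last coordinate random walk on `ℤ`. -/
def lastN (μ : Zd d → ℝ) : ℕ → ℤ → ℤ → ℝ
  | 0 => fun k k' => if k = k' then 1 else 0
  | n + 1 => fun k k' => ∑' j, lastN μ n k j * lastStep μ (k' - j)

/-- The convergence norm `ρ(P) = limsup_n (p^(n)(z,z'))^{1/n}` (independent of `z, z'`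
by irreducibility; we take `z = z' = 0`). -/
def rho (μ μ₀ : Zd d → ℝ) : ℝ :=
  limsup (fun n : ℕ => (kerN μ μ₀ n 0 0) ^ ((n : ℝ)⁻¹)) atTop

/-- `μ` is a nonnegative measure on `ℤ^d` with `0 < μ(ℤ^d) ≤ 1`. -/
def IsMeasure (μ : Zd d → ℝ) : Prop := (∀ z, 0 ≤ μ z) ∧ 0 < ∑' z, μ z ∧ ∑' z, μ z ≤ 1

/-- (H0): `μ(x,y) = 0` for `y < -1` and `μ₀(x,y) = 0` for `y < 0`. -/
def H0 (μ μ₀ : Zd d → ℝ) : Prop :=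
  (∀ z : Zd d, z.2 < -1 → μ z = 0) ∧ (∀ z : Zd d, z.2 < 0 → μ₀ z = 0)

/-- (H1): the kernel `P` is irreducible on `E`. -/
def H1 (μ μ₀ : Zd d → ℝ) : Prop := ∀ z z' : Ed d, ∃ n, 0 < kerN μ μ₀ n z z'

/-- (H2): the homogeneous random walk with step distribution `μ` is irreducible on `ℤ^d`. -/
def H2 (μ : Zd d → ℝ) : Prop := ∀ z z' : Zd d, ∃ n, 0 < homN μ n z z'

/-- (H3) for a single measure: the jump generating function is finite everywhere
(the defining series converges for every `a ∈ ℝ^d`). -/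
def H3 (μ : Zd d → ℝ) : Prop := ∀ a : Rd d, Summable fun z => μ z * Real.exp (dotZ a z)

/-- (H4): the last coordinate of the `μ`-random walk is aperiodic
(the gcd of `{n : p^n(0,0) > 0}` equals `1`). -/
def H4 (μ : Zd d → ℝ) : Prop := ∀ m : ℕ, (∀ n : ℕ, 0 < lastN μ n 0 0 → m ∣ n) → m = 1

/-- The sublevel set `D^t = {a : φ(a) ≤ t}`. -/
def Dset (μ : Zd d → ℝ) (t : ℝ) : Set (Rd d) := {a | phi μ a ≤ t}

/-- `Θ^t = {α ∈ ℝ^{d-1} : inf_β max(φ(α,β), φ₀(α,β)) ≤ t}`. -/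
def Theta (μ μ₀ : Zd d → ℝ) (t : ℝ) : Set (Fin d → ℝ) :=
  {α | sInf (Set.range fun β : ℝ => max (phi μ (α, β)) (phi μ₀ (α, β))) ≤ t}

/-- `Ĥ^t = (Θ^t × ℝ) ∩ D^t`. -/
def Hhat (μ μ₀ : Zd d → ℝ) (t : ℝ) : Set (Rd d) :=
  {a | a.1 ∈ Theta μ μ₀ t ∧ phi μ a ≤ t}

/-- Partial derivative of `f : ℝ^d → ℝ` in the last coordinate. -/
def dBeta (f : Rd d → ℝ) (a : Rd d) : ℝ := fderiv ℝ f a (0, 1)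

/-- The (coordinate) gradient of `f : ℝ^d → ℝ`. -/
def gradV (f : Rd d → ℝ) (a : Rd d) : Rd d :=
  (fun i => fderiv ℝ f a (Pi.single i 1, 0), fderiv ℝ f a (0, 1))

/-- `∂₊D^t`: boundary points of `D^t` where the last coordinate of `∇φ` is `≥ 0`. -/
def dPlus (μ : Zd d → ℝ) (t : ℝ) : Set (Rd d) :=
  {a | a ∈ frontier (Dset μ t) ∧ 0 ≤ dBeta (phi μ) a}

/-- `∂₀D^t`: boundary points of `D^t` where the last coordinate of `∇φ` is `0`. -/
def dZero (μ : Zd d → ℝ) (t : ℝ) : Set (Rd d) :=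
  {a | a ∈ frontier (Dset μ t) ∧ dBeta (phi μ) a = 0}

/-- `Γ₊^t = Ĥ^t ∩ ∂₊D^t`. -/
def GammaPlus (μ μ₀ : Zd d → ℝ) (t : ℝ) : Set (Rd d) := Hhat μ μ₀ t ∩ dPlus μ t

/-- The normal cone `V_t(a)` to `Ĥ^t` at `a`. -/
def Vcone (μ μ₀ : Zd d → ℝ) (t : ℝ) (a : Rd d) : Set (Rd d) :=
  {q | ∀ a' ∈ Hhat μ μ₀ t, dotR q (a' - a) ≤ 0}

/-- `β̄ = min{b : φ(α,b) ≤ t}`. -/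
def betaBar (μ : Zd d → ℝ) (t : ℝ) (α : Fin d → ℝ) : ℝ := sInf {b : ℝ | phi μ (α, b) ≤ t}

/-- `ā^t`: the lowest point of `D^t` with the same first `d-1` coordinates as `a`. -/
def abar (μ : Zd d → ℝ) (t : ℝ) (a : Rd d) : Rd d := (a.1, betaBar μ t a.1)

/-- The Green function `G_t(z,z') = ∑_n t^{-n} p^(n)(z,z')`. -/
def green (μ μ₀ : Zd d → ℝ) (t : ℝ) (z z' : Ed d) : ℝ :=
  ∑' n, (t ^ n)⁻¹ * kerN μ μ₀ n z z'

/-- The `t`-Martin kernel `K_t(z,z') = G_t(z,z')/G_t(z₀,z')` with reference point `z₀`. -/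
def martin (μ μ₀ : Zd d → ℝ) (t : ℝ) (z₀ z z' : Ed d) : ℝ :=
  green μ μ₀ t z z' / green μ μ₀ t z₀ z'

/-- Euclidean norm on `ℝ^d = ℝ^{d-1} × ℝ`. -/
def euclNorm (a : Rd d) : ℝ := Real.sqrt ((∑ i, a.1 i ^ 2) + a.2 ^ 2)

/-- The point of `ℝ^d` corresponding to `z ∈ E`. -/
def vecE (z : Ed d) : Rd d := (fun i => (z.1 i : ℝ), (z.2 : ℝ))

/-- Euclidean distance from a point `v` to a set `S ⊆ ℝ^d`. -/
def distTo (S : Set (Rd d)) (v : Rd d) : ℝ := sInf ((fun q => euclNorm (v - q)) '' S)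

/-- The function `h_{a,t}` of the paper. -/
def hFun (μ μ₀ : Zd d → ℝ) (t : ℝ) (a : Rd d) (z : Ed d) : ℝ :=
  if a ∉ dZero μ t ∧ phi μ₀ (abar μ t a) < t then
    Real.exp (dotE a z)
      - ((t - phi μ₀ a) / (t - phi μ₀ (abar μ t a))) * Real.exp (dotE (abar μ t a) z)
  else if a = abar μ t a ∧ a ∈ dZero μ t ∧ phi μ₀ a < t then
    ((z.2 : ℝ) + dBeta (phi μ₀) a / (t - phi μ₀ a)) * Real.exp (dotE a z)
  else Real.exp (dotE (abar μ t a) z)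


section Aux

variable {d : ℕ}

open ENNReal in
lemma ofReal_tsum_le {ι : Type*} (f : ι → ℝ) (hf : ∀ i, 0 ≤ f i) :
    ENNReal.ofReal (∑' i, f i) ≤ ∑' i, ENNReal.ofReal (f i) := by
  by_cases h : Summable f
  · exact le_of_eq (ENNReal.ofReal_tsum_of_nonneg hf h)
  · rw [tsum_eq_zero_of_not_summable h]; simp

lemma ker_nonneg (μ μ₀ : Zd d → ℝ) (hμ : ∀ z, 0 ≤ μ z) (hμ₀ : ∀ z, 0 ≤ μ₀ z)
    (z z' : Ed d) : 0 ≤ ker μ μ₀ z z' := by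
  unfold ker; split <;> [exact hμ₀ _; exact hμ _]

lemma kerN_nonneg (μ μ₀ : Zd d → ℝ) (hμ : ∀ z, 0 ≤ μ z) (hμ₀ : ∀ z, 0 ≤ μ₀ z)
    (n : ℕ) (z z' : Ed d) : 0 ≤ kerN μ μ₀ n z z' := by
  induction n generalizing z z' with
  | zero => unfold kerN; positivity
  | succ n ih =>
    unfold kerN
    exact tsum_nonneg fun w => mul_nonneg (ih z w) (ker_nonneg μ μ₀ hμ hμ₀ w z')

/-- ENNReal version of the `n`-step kernel. -/
def kerNE (μ μ₀ : Zd d → ℝ) : ℕ → Ed d → Ed d → ENNReal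
  | 0 => fun z z' => if z = z' then 1 else 0
  | n + 1 => fun z z' => ∑' w, kerNE μ μ₀ n z w * ENNReal.ofReal (ker μ μ₀ w z')

lemma ofReal_kerN_le (μ μ₀ : Zd d → ℝ) (hμ : ∀ z, 0 ≤ μ z) (hμ₀ : ∀ z, 0 ≤ μ₀ z)
    (n : ℕ) (z z' : Ed d) :
    ENNReal.ofReal (kerN μ μ₀ n z z') ≤ kerNE μ μ₀ n z z' := by
  induction n generalizing z z' with
  | zero =>
    unfold kerN kerNE; split <;> simp
  | succ n ih =>
    unfold kerN kerNE
    refine le_trans (ofReal_tsum_le _ fun w =>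
      mul_nonneg (kerN_nonneg μ μ₀ hμ hμ₀ n z w) (ker_nonneg μ μ₀ hμ hμ₀ w z')) ?_
    refine ENNReal.tsum_le_tsum fun w => ?_
    rw [ENNReal.ofReal_mul (kerN_nonneg μ μ₀ hμ hμ₀ n z w)]
    exact mul_le_mul_left (ih z w) _

lemma jumpE_injective (z : Ed d) : Function.Injective (jump z) := by
  intro z1 z2 h
  unfold jump at h
  obtain ⟨h1, h2⟩ := Prod.mk.injEq .. ▸ h
  have h1' : z1.1 = z2.1 := by
    have := congrArg (· + z.1) h1; simpa using this
  have h2' : z1.2 = z2.2 := by omega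
  exact Prod.ext h1' h2'

lemma dotZ_jump (a : Rd d) (z z' : Ed d) :
    dotZ a (jump z z') = dotE a z' - dotE a z := by
  unfold dotZ dotE jump
  have key : ∀ i : Fin d, a.1 i * (((z'.1 - z.1) i : ℤ) : ℝ)
      = a.1 i * (z'.1 i : ℝ) - a.1 i * (z.1 i : ℝ) := by
    intro i; simp only [Pi.sub_apply]; push_cast; ring
  rw [Finset.sum_congr rfl fun i _ => key i, Finset.sum_sub_distrib]
  push_cast
  ring

lemma one_step_bound (μ μ₀ : Zd d → ℝ) (hμ : ∀ z, 0 ≤ μ z) (hμ₀ : ∀ z, 0 ≤ μ₀ z)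
    (h3 : H3 μ) (h3' : H3 μ₀) (a : Rd d) (w : Ed d) :
    ∑' z' : Ed d, ENNReal.ofReal (ker μ μ₀ w z') * ENNReal.ofReal (Real.exp (dotE a z'))
      ≤ ENNReal.ofReal (max (phi μ a) (phi μ₀ a)) * ENNReal.ofReal (Real.exp (dotE a w)) := by
  set M := max (phi μ a) (phi μ₀ a) with hM
  have key : ∀ (ν : Zd d → ℝ), (∀ u, 0 ≤ ν u) → H3 ν → phi ν a ≤ M →
      ∑' z' : Ed d, ENNReal.ofReal (ν (jump w z')) * ENNReal.ofReal (Real.exp (dotE a z'))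
        ≤ ENNReal.ofReal M * ENNReal.ofReal (Real.exp (dotE a w)) := by
    intro ν hν hsum hle
    have step : ∀ z' : Ed d,
        ENNReal.ofReal (ν (jump w z')) * ENNReal.ofReal (Real.exp (dotE a z'))
        = ENNReal.ofReal (ν (jump w z') * Real.exp (dotZ a (jump w z')))
            * ENNReal.ofReal (Real.exp (dotE a w)) := by
      intro z'
      rw [ENNReal.ofReal_mul (hν _), mul_assoc, ← ENNReal.ofReal_mul (Real.exp_nonneg _),
        ← Real.exp_add, dotZ_jump]
      ring_nf
    calc ∑' z' : Ed d, ENNReal.ofReal (ν (jump w z')) * ENNReal.ofReal (Real.exp (dotE a z'))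
        = (∑' z' : Ed d, ENNReal.ofReal (ν (jump w z') * Real.exp (dotZ a (jump w z'))))
            * ENNReal.ofReal (Real.exp (dotE a w)) := by
          rw [← ENNReal.tsum_mul_right]; exact tsum_congr step
      _ ≤ (∑' u : Zd d, ENNReal.ofReal (ν u * Real.exp (dotZ a u)))
            * ENNReal.ofReal (Real.exp (dotE a w)) := by
          exact mul_le_mul_left
            (ENNReal.tsum_comp_le_tsum_of_injective (jumpE_injective w) _) _
      _ = ENNReal.ofReal (phi ν a) * ENNReal.ofReal (Real.exp (dotE a w)) := by
          rw [← ENNReal.ofReal_tsum_of_nonneg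
            (fun u => mul_nonneg (hν u) (Real.exp_nonneg _)) (hsum a)]
          rfl
      _ ≤ ENNReal.ofReal M * ENNReal.ofReal (Real.exp (dotE a w)) :=
          mul_le_mul_left (ENNReal.ofReal_le_ofReal hle) _
  by_cases hw : w.2 = 0
  · simpa [ker, hw] using key μ₀ hμ₀ h3' (le_max_right _ _)
  · simpa [ker, hw] using key μ hμ h3 (le_max_left _ _)

lemma kerNE_weighted_bound (μ μ₀ : Zd d → ℝ) (hμ : ∀ z, 0 ≤ μ z) (hμ₀ : ∀ z, 0 ≤ μ₀ z)
    (h3 : H3 μ) (h3' : H3 μ₀) (a : Rd d) (n : ℕ) (z : Ed d) :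
    ∑' z' : Ed d, kerNE μ μ₀ n z z' * ENNReal.ofReal (Real.exp (dotE a z'))
      ≤ ENNReal.ofReal (max (phi μ a) (phi μ₀ a)) ^ n * ENNReal.ofReal (Real.exp (dotE a z)) := by
  set Me := ENNReal.ofReal (max (phi μ a) (phi μ₀ a))
  induction n generalizing z with
  | zero =>
    unfold kerNE
    rw [pow_zero, one_mul]
    refine le_of_eq ?_
    calc ∑' z' : Ed d, (if z = z' then (1:ENNReal) else 0) * ENNReal.ofReal (Real.exp (dotE a z'))
        = ∑' z' : Ed d, (if z' = z then ENNReal.ofReal (Real.exp (dotE a z)) else 0) := by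
          refine tsum_congr fun z' => ?_
          by_cases h : z' = z
          · subst h; simp
          · have h' : z ≠ z' := fun hh => h hh.symm
            simp [h, h']
      _ = ENNReal.ofReal (Real.exp (dotE a z)) := tsum_ite_eq z _
  | succ n ih =>
    unfold kerNE
    calc ∑' z' : Ed d, (∑' w, kerNE μ μ₀ n z w * ENNReal.ofReal (ker μ μ₀ w z'))
            * ENNReal.ofReal (Real.exp (dotE a z'))
        = ∑' z' : Ed d, ∑' w, kerNE μ μ₀ n z w * ENNReal.ofReal (ker μ μ₀ w z')
            * ENNReal.ofReal (Real.exp (dotE a z')) := by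
          refine tsum_congr fun z' => ?_; rw [ENNReal.tsum_mul_right]
      _ = ∑' w, ∑' z' : Ed d, kerNE μ μ₀ n z w * (ENNReal.ofReal (ker μ μ₀ w z')
            * ENNReal.ofReal (Real.exp (dotE a z'))) := by
          rw [ENNReal.tsum_comm]
          exact tsum_congr fun w => tsum_congr fun z' => by ring
      _ = ∑' w, kerNE μ μ₀ n z w * ∑' z' : Ed d, ENNReal.ofReal (ker μ μ₀ w z')
            * ENNReal.ofReal (Real.exp (dotE a z')) := by
          exact tsum_congr fun w => ENNReal.tsum_mul_left
      _ ≤ ∑' w, kerNE μ μ₀ n z w * (Me * ENNReal.ofReal (Real.exp (dotE a w))) := by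
          exact ENNReal.tsum_le_tsum fun w =>
            mul_le_mul_right (one_step_bound μ μ₀ hμ hμ₀ h3 h3' a w) _
      _ = Me * ∑' w, kerNE μ μ₀ n z w * ENNReal.ofReal (Real.exp (dotE a w)) := by
          rw [ENNReal.tsum_mul_left.symm]
          exact tsum_congr fun w => by ring
      _ ≤ Me * (Me ^ n * ENNReal.ofReal (Real.exp (dotE a z))) := mul_le_mul_right (ih z) _
      _ = Me ^ (n + 1) * ENNReal.ofReal (Real.exp (dotE a z)) := by ring

lemma kerN_le_pow (μ μ₀ : Zd d → ℝ) (hμ : ∀ z, 0 ≤ μ z) (hμ₀ : ∀ z, 0 ≤ μ₀ z)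
    (h3 : H3 μ) (h3' : H3 μ₀) (a : Rd d) (n : ℕ) :
    kerN μ μ₀ n 0 0 ≤ max (phi μ a) (phi μ₀ a) ^ n := by
  set M := max (phi μ a) (phi μ₀ a) with hM
  have hM0 : 0 ≤ M := le_trans (tsum_nonneg fun u => mul_nonneg (hμ u) (Real.exp_nonneg _))
    (le_max_left _ _)
  have he0 : dotE a (0 : Ed d) = 0 := by simp [dotE]
  have key : ENNReal.ofReal (kerN μ μ₀ n 0 0) ≤ ENNReal.ofReal (M ^ n) := by
    calc ENNReal.ofReal (kerN μ μ₀ n 0 0)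
        = ENNReal.ofReal (kerN μ μ₀ n 0 0) * ENNReal.ofReal (Real.exp (dotE a (0 : Ed d))) := by
          rw [he0]; simp
      _ ≤ kerNE μ μ₀ n 0 0 * ENNReal.ofReal (Real.exp (dotE a (0 : Ed d))) :=
          mul_le_mul_left (ofReal_kerN_le μ μ₀ hμ hμ₀ n 0 0) _
      _ ≤ ∑' z' : Ed d, kerNE μ μ₀ n 0 z' * ENNReal.ofReal (Real.exp (dotE a z')) :=
          ENNReal.le_tsum 0
      _ ≤ ENNReal.ofReal M ^ n * ENNReal.ofReal (Real.exp (dotE a (0 : Ed d))) :=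
          kerNE_weighted_bound μ μ₀ hμ hμ₀ h3 h3' a n 0
      _ = ENNReal.ofReal (M ^ n) := by rw [he0, ENNReal.ofReal_pow hM0]; simp
  exact (ENNReal.ofReal_le_ofReal_iff (by positivity)).mp key

end Aux

/-- under (H0)-(H3), the upper bound
`ρ(P) ≤ inf_{a ∈ ℝ^d} max(φ(a), φ₀(a))` holds. -/
theorem convergence_norm_le {d : ℕ} (μ μ₀ : Zd d → ℝ)
    (hμ : IsMeasure μ) (hμ₀ : IsMeasure μ₀)
    (h0 : H0 μ μ₀) (h1 : H1 μ μ₀) (h2 : H2 μ) (h3 : H3 μ) (h3' : H3 μ₀) :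
    rho μ μ₀ ≤ sInf (Set.range fun a : Rd d => max (phi μ a) (phi μ₀ a)) := by
  have hμn := hμ.1
  have hμ₀n := hμ₀.1
  have hbound : ∀ a : Rd d, rho μ μ₀ ≤ max (phi μ a) (phi μ₀ a) := by
    intro a
    set M := max (phi μ a) (phi μ₀ a) with hMdef
    have hM0 : 0 ≤ M := le_trans
      (tsum_nonneg fun u => mul_nonneg (hμn u) (Real.exp_nonneg _)) (le_max_left _ _)
    have hseq : ∀ n : ℕ, 1 ≤ n → (kerN μ μ₀ n 0 0) ^ ((n : ℝ)⁻¹) ≤ M := by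
      intro n hn
      have hker0 : 0 ≤ kerN μ μ₀ n 0 0 := kerN_nonneg μ μ₀ hμn hμ₀n n 0 0
      have h1 : kerN μ μ₀ n 0 0 ≤ M ^ n := kerN_le_pow μ μ₀ hμn hμ₀n h3 h3' a n
      have h2 : (kerN μ μ₀ n 0 0) ^ ((n : ℝ)⁻¹) ≤ (M ^ n) ^ ((n : ℝ)⁻¹) :=
        Real.rpow_le_rpow hker0 h1 (by positivity)
      have hn0 : (n : ℝ) ≠ 0 := by positivity
      have h3'' : ((M ^ n : ℝ)) ^ ((n : ℝ)⁻¹) = M := by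
        rw [← Real.rpow_natCast M n, ← Real.rpow_mul hM0, mul_inv_cancel₀ hn0,
          Real.rpow_one]
      rw [h3''] at h2
      exact h2
    have hcb : Filter.IsCoboundedUnder (· ≤ ·)  atTop
        (fun n : ℕ => (kerN μ μ₀ n 0 0) ^ ((n : ℝ)⁻¹)) := by
      refine isCoboundedUnder_le_of_le atTop (x := 0) fun n => ?_
      exact Real.rpow_nonneg (kerN_nonneg μ μ₀ hμn hμ₀n n 0 0) _
    exact limsup_le_of_le hcb (Filter.eventually_atTop.mpr ⟨1, hseq⟩)
  exact le_csInf (Set.range_nonempty _) (by rintro b ⟨a, rfl⟩; exact hbound a)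
end RWHalfspace
end
end

section
/- Assume (H0) and (H3), and let t > 0. Let a ∈ ℝ^d satisfy φ(a) = t, (∂φ/∂β)(a) = 0 (the partial derivative in the last coordinate), and φ₀(a) < t. Then the function h(x,y) = (y + c) e^{a·(x,y)} on E = ℤ^{d-1} × ℕ, where c = (∂φ₀/∂β)(a)/(t − φ₀(a)), satisfies Σ_{z'∈E} p(z,z') h(z') = t h(z) for every z ∈ E, i.e. h is t-harmonic for P. -/
open scoped Classical BigOperators
open Filter

noncomputable section

namespace RWHalfspace

variable {d : ℕ}

/-- `ℓ¹` norm of `z ∈ ℤ^d` as a real. -/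
def normZ (z : Zd d) : ℝ := (∑ i, |(z.1 i : ℝ)|) + |(z.2 : ℝ)|

lemma normZ_nonneg (z : Zd d) : 0 ≤ normZ z := by
  have : ∀ i ∈ Finset.univ, (0:ℝ) ≤ |(z.1 i : ℝ)| := fun i _ => abs_nonneg _
  exact add_nonneg (Finset.sum_nonneg this) (abs_nonneg _)

lemma dotZ_add_left (a b : Rd d) (z : Zd d) : dotZ (a + b) z = dotZ a z + dotZ b z := by
  simp only [dotZ, Prod.fst_add, Prod.snd_add, Pi.add_apply, add_mul, Finset.sum_add_distrib]
  ring

lemma dotZ_le_norm (v : Rd d) (z : Zd d) : dotZ v z ≤ ‖v‖ * normZ z := by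
  have h1 : ∀ i ∈ Finset.univ, v.1 i * (z.1 i : ℝ) ≤ ‖v‖ * |(z.1 i : ℝ)| := by
    intro i _
    calc v.1 i * (z.1 i : ℝ) ≤ |v.1 i * (z.1 i : ℝ)| := le_abs_self _
    _ = |v.1 i| * |(z.1 i : ℝ)| := abs_mul _ _
    _ ≤ ‖v‖ * |(z.1 i : ℝ)| := by
        apply mul_le_mul_of_nonneg_right _ (abs_nonneg _)
        calc |v.1 i| = ‖v.1 i‖ := rfl
        _ ≤ ‖v.1‖ := norm_le_pi_norm v.1 i
        _ ≤ ‖v‖ := norm_fst_le v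
  have h2 : v.2 * (z.2 : ℝ) ≤ ‖v‖ * |(z.2 : ℝ)| := by
    calc v.2 * (z.2 : ℝ) ≤ |v.2 * (z.2 : ℝ)| := le_abs_self _
    _ = |v.2| * |(z.2 : ℝ)| := abs_mul _ _
    _ ≤ ‖v‖ * |(z.2 : ℝ)| := by
        apply mul_le_mul_of_nonneg_right _ (abs_nonneg _)
        exact norm_snd_le v
  calc dotZ v z ≤ (∑ i, ‖v‖ * |(z.1 i : ℝ)|) + ‖v‖ * |(z.2 : ℝ)| :=
        add_le_add (Finset.sum_le_sum h1) h2
  _ = ‖v‖ * normZ z := by rw [normZ, ← Finset.mul_sum, mul_add]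

/-- Sign vector used in the expansion bound. -/
def sgnV (a : Rd d) (c : ℝ) (g : Fin d → Bool) (b : Bool) : Rd d :=
  (fun i => a.1 i + (if g i then c else -c), a.2 + (if b then c else -c))

lemma exp_dot_expand (a : Rd d) (c : ℝ) (z : Zd d) :
    Real.exp (dotZ a z) * ((∏ i, (Real.exp (c * (z.1 i : ℝ)) + Real.exp (-(c * (z.1 i : ℝ)))))
        * (Real.exp (c * (z.2 : ℝ)) + Real.exp (-(c * (z.2 : ℝ)))))
      = ∑ g : Fin d → Bool, ∑ b : Bool, Real.exp (dotZ (sgnV a c g b) z) := by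
  have hprod : (∏ i, (Real.exp (c * (z.1 i : ℝ)) + Real.exp (-(c * (z.1 i : ℝ)))))
      = ∑ g : Fin d → Bool, ∏ i, Real.exp ((if g i then c else -c) * (z.1 i : ℝ)) := by
    have : ∀ i, (Real.exp (c * (z.1 i : ℝ)) + Real.exp (-(c * (z.1 i : ℝ))))
        = ∑ b : Bool, Real.exp ((if b then c else -c) * (z.1 i : ℝ)) := by
      intro i; rw [Fintype.sum_bool]; simp [neg_mul]
    simp_rw [this]
    rw [Finset.prod_univ_sum]
    rfl
  rw [hprod, Finset.sum_mul, Finset.mul_sum]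
  apply Finset.sum_congr rfl
  intro g _
  rw [Fintype.sum_bool]
  have he : ∀ (g : Fin d → Bool) (b : Bool),
      Real.exp (dotZ (sgnV a c g b) z)
        = Real.exp (dotZ a z) * ((∏ i, Real.exp ((if g i then c else -c) * (z.1 i : ℝ)))
            * Real.exp ((if b then c else -c) * (z.2 : ℝ))) := by
    intro g b
    rw [← Real.exp_sum, ← Real.exp_add, ← Real.exp_add]
    congr 1
    simp only [dotZ, sgnV, add_mul, Finset.sum_add_distrib]
    ring
  rw [he g true, he g false]
  norm_num [neg_mul]
  ring

lemma summable_exp_norm {μ : Zd d → ℝ} (h3 : H3 μ) (hpos : ∀ z, 0 ≤ μ z) (a : Rd d)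
    (c : ℝ) (hc : 0 ≤ c) :
    Summable fun z : Zd d => μ z * Real.exp (dotZ a z + c * normZ z) := by
  have hbig : Summable fun z : Zd d =>
      ∑ p : (Fin d → Bool) × Bool, μ z * Real.exp (dotZ (sgnV a c p.1 p.2) z) := by
    exact summable_sum fun p _ => h3 (sgnV a c p.1 p.2)
  apply Summable.of_nonneg_of_le (fun z => mul_nonneg (hpos z) (Real.exp_pos _).le) _ hbig
  intro z
  have key : Real.exp (dotZ a z + c * normZ z)
      ≤ ∑ p : (Fin d → Bool) × Bool, Real.exp (dotZ (sgnV a c p.1 p.2) z) := by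
    have habs : ∀ m : ℝ, Real.exp (c * |m|) ≤ Real.exp (c * m) + Real.exp (-(c * m)) := by
      intro m
      rcases abs_choice m with h | h
      · rw [h]; nlinarith [(Real.exp_pos (-(c*m))).le]
      · rw [h, mul_neg]; nlinarith [(Real.exp_pos (c*m)).le]
    have h1 : Real.exp (dotZ a z + c * normZ z)
        = Real.exp (dotZ a z) * ((∏ i, Real.exp (c * |(z.1 i : ℝ)|))
            * Real.exp (c * |(z.2 : ℝ)|)) := by
      rw [← Real.exp_sum, ← Real.exp_add, ← Real.exp_add]
      congr 1
      rw [normZ, mul_add, Finset.mul_sum]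
    have h2 : (∏ i, Real.exp (c * |(z.1 i : ℝ)|)) * Real.exp (c * |(z.2 : ℝ)|)
        ≤ (∏ i, (Real.exp (c * (z.1 i : ℝ)) + Real.exp (-(c * (z.1 i : ℝ)))))
            * (Real.exp (c * (z.2 : ℝ)) + Real.exp (-(c * (z.2 : ℝ)))) := by
      apply mul_le_mul (Finset.prod_le_prod (fun i _ => (Real.exp_pos _).le)
        (fun i _ => habs _)) (habs _) (Real.exp_pos _).le
      apply Finset.prod_nonneg
      intro i _
      positivity
    calc Real.exp (dotZ a z + c * normZ z)
        ≤ Real.exp (dotZ a z) * ((∏ i, (Real.exp (c * (z.1 i : ℝ)) + Real.exp (-(c * (z.1 i : ℝ)))))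
            * (Real.exp (c * (z.2 : ℝ)) + Real.exp (-(c * (z.2 : ℝ))))) := by
          rw [h1]; exact mul_le_mul_of_nonneg_left h2 (Real.exp_pos _).le
    _ = ∑ g : Fin d → Bool, ∑ b : Bool, Real.exp (dotZ (sgnV a c g b) z) := exp_dot_expand a c z
    _ = ∑ p : (Fin d → Bool) × Bool, Real.exp (dotZ (sgnV a c p.1 p.2) z) := by
        rw [Fintype.sum_prod_type]
  calc μ z * Real.exp (dotZ a z + c * normZ z)
      ≤ μ z * ∑ p : (Fin d → Bool) × Bool, Real.exp (dotZ (sgnV a c p.1 p.2) z) :=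
        mul_le_mul_of_nonneg_left key (hpos z)
  _ = ∑ p : (Fin d → Bool) × Bool, μ z * Real.exp (dotZ (sgnV a c p.1 p.2) z) := by
      rw [Finset.mul_sum]

lemma normZ_le_exp (z : Zd d) : normZ z ≤ Real.exp (normZ z) := by
  have := Real.add_one_le_exp (normZ z)
  linarith

lemma summable_moment {μ : Zd d → ℝ} (h3 : H3 μ) (hpos : ∀ z, 0 ≤ μ z) (a : Rd d) :
    Summable fun z : Zd d => μ z * (z.2 : ℝ) * Real.exp (dotZ a z) := by
  have hb := summable_exp_norm h3 hpos a 2 (by norm_num)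
  apply Summable.of_abs
  apply Summable.of_nonneg_of_le (fun z => abs_nonneg _) _ hb
  intro z
  rw [abs_mul, abs_mul, abs_of_nonneg (hpos z), Real.abs_exp]
  have h1 : |(z.2 : ℝ)| ≤ Real.exp (2 * normZ z) := by
    calc |(z.2 : ℝ)| ≤ normZ z := le_add_of_nonneg_left
          (Finset.sum_nonneg fun i _ => abs_nonneg _)
    _ ≤ Real.exp (normZ z) := normZ_le_exp z
    _ ≤ Real.exp (2 * normZ z) := by
        apply Real.exp_le_exp.2
        have := normZ_nonneg z
        linarith
  calc μ z * |(z.2 : ℝ)| * Real.exp (dotZ a z)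
      ≤ μ z * Real.exp (2 * normZ z) * Real.exp (dotZ a z) := by
        apply mul_le_mul_of_nonneg_right (mul_le_mul_of_nonneg_left h1 (hpos z))
          (Real.exp_pos _).le
  _ = μ z * Real.exp (dotZ a z + 2 * normZ z) := by
      rw [Real.exp_add]; ring

/-- The linear functional `v ↦ v · z` as a continuous linear map. -/
def ellZ (z : Zd d) : Rd d →L[ℝ] ℝ :=
  LinearMap.toContinuousLinearMap
    { toFun := fun v => dotZ v z
      map_add' := fun v w => dotZ_add_left v w z
      map_smul' := fun c v => by
        simp only [dotZ, Prod.smul_fst, Prod.smul_snd, Pi.smul_apply, smul_eq_mul,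
          RingHom.id_apply, mul_add, Finset.mul_sum, mul_assoc] }

lemma ellZ_apply (z : Zd d) (v : Rd d) : ellZ z v = dotZ v z := rfl

lemma ellZ_norm_le (z : Zd d) : ‖ellZ z‖ ≤ normZ z := by
  apply ContinuousLinearMap.opNorm_le_bound _ (normZ_nonneg z)
  intro v
  rw [ellZ_apply, Real.norm_eq_abs, abs_le]
  constructor
  · have := dotZ_le_norm (-v) z
    have hneg : dotZ (-v) z = -dotZ v z := by
      simp only [dotZ, Prod.fst_neg, Prod.snd_neg, Pi.neg_apply, neg_mul,
        Finset.sum_neg_distrib]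
      ring
    rw [hneg, norm_neg] at this
    linarith [mul_comm ‖v‖ (normZ z)]
  · have := dotZ_le_norm v z
    linarith

lemma hasFDerivAt_phi {μ : Zd d → ℝ} (h3 : H3 μ) (hpos : ∀ z, 0 ≤ μ z) (a : Rd d) :
    HasFDerivAt (phi μ)
      (∑' z : Zd d, (μ z * Real.exp (dotZ a z)) • ellZ z) a := by
  have hu : Summable fun z : Zd d => μ z * Real.exp (dotZ a z + 2 * normZ z) :=
    summable_exp_norm h3 hpos a 2 (by norm_num)
  have hf : ∀ (z : Zd d) (x : Rd d), x ∈ Metric.ball a 1 →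
      HasFDerivAt (fun y : Rd d => μ z * Real.exp (dotZ y z))
        ((μ z * Real.exp (dotZ x z)) • ellZ z) x := by
    intro z x _
    have h1 : HasFDerivAt (fun y : Rd d => dotZ y z) (ellZ z) x := (ellZ z).hasFDerivAt
    have h2 := h1.exp
    have h3' := h2.const_mul (μ z)
    rw [← smul_smul]
    exact h3'
  have hbound : ∀ (z : Zd d) (x : Rd d), x ∈ Metric.ball a 1 →
      ‖(μ z * Real.exp (dotZ x z)) • ellZ z‖ ≤ μ z * Real.exp (dotZ a z + 2 * normZ z) := by
    intro z x hx
    rw [norm_smul _ (ellZ z), Real.norm_eq_abs, abs_mul, abs_of_nonneg (hpos z), Real.abs_exp]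
    have hdot : dotZ x z ≤ dotZ a z + normZ z := by
      have h1 : dotZ x z = dotZ a z + dotZ (x - a) z := by
        have := dotZ_add_left a (x - a) z
        simpa using this
      have h2 : dotZ (x - a) z ≤ ‖x - a‖ * normZ z := dotZ_le_norm _ z
      have h3 : ‖x - a‖ < 1 := by rwa [Metric.mem_ball, dist_eq_norm] at hx
      nlinarith [normZ_nonneg z, norm_nonneg (x - a)]
    calc μ z * Real.exp (dotZ x z) * ‖ellZ z‖
        ≤ μ z * Real.exp (dotZ a z + normZ z) * Real.exp (normZ z) := by
          apply mul_le_mul (mul_le_mul_of_nonneg_left (Real.exp_le_exp.2 hdot) (hpos z))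
            ((ellZ_norm_le z).trans (normZ_le_exp z)) (norm_nonneg _)
          exact mul_nonneg (hpos z) (Real.exp_pos _).le
    _ = μ z * Real.exp (dotZ a z + 2 * normZ z) := by rw [mul_assoc, ← Real.exp_add]; ring_nf
  have := hasFDerivAt_tsum_of_isPreconnected hu Metric.isOpen_ball
    (convex_ball a 1).isPreconnected hf hbound (Metric.mem_ball_self one_pos) (h3 a)
    (Metric.mem_ball_self one_pos)
  exact this

lemma dBeta_phi {μ : Zd d → ℝ} (h3 : H3 μ) (hpos : ∀ z, 0 ≤ μ z) (a : Rd d) :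
    dBeta (phi μ) a = ∑' z : Zd d, μ z * (z.2 : ℝ) * Real.exp (dotZ a z) := by
  have hF := hasFDerivAt_phi h3 hpos a
  have hsum : Summable fun z : Zd d => (μ z * Real.exp (dotZ a z)) • ellZ z := by
    apply Summable.of_norm_bounded (summable_exp_norm h3 hpos a 2 (by norm_num))
    intro z
    rw [norm_smul _ (ellZ z), Real.norm_eq_abs, abs_mul, abs_of_nonneg (hpos z), Real.abs_exp]
    calc μ z * Real.exp (dotZ a z) * ‖ellZ z‖
        ≤ μ z * Real.exp (dotZ a z) * Real.exp (normZ z) :=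
          mul_le_mul_of_nonneg_left ((ellZ_norm_le z).trans (normZ_le_exp z))
            (mul_nonneg (hpos z) (Real.exp_pos _).le)
    _ ≤ μ z * Real.exp (dotZ a z + 2 * normZ z) := by
        rw [mul_assoc, ← Real.exp_add]
        apply mul_le_mul_of_nonneg_left (Real.exp_le_exp.2 _) (hpos z)
        have := normZ_nonneg z
        linarith
  rw [dBeta, hF.fderiv]
  have := ContinuousLinearMap.map_tsum
    (ContinuousLinearMap.apply ℝ ℝ ((0, 1) : Rd d)) hsum
  simp only [ContinuousLinearMap.apply_apply] at this
  rw [this]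
  congr 1
  funext z
  rw [ContinuousLinearMap.smul_apply, ellZ_apply]
  have : dotZ ((0, 1) : Rd d) z = (z.2 : ℝ) := by
    simp [dotZ]
  rw [this, smul_eq_mul]
  ring

lemma tsum_shift {ν : Zd d → ℝ} (hpos : ∀ w, 0 ≤ ν w) (h3 : H3 ν) (a : Rd d) (c : ℝ)
    (z : Ed d) (hvan : ∀ w : Zd d, w.2 < -(z.2 : ℤ) → ν w = 0) :
    ∑' z' : Ed d, ν (jump z z') * (((z'.2 : ℝ) + c) * Real.exp (dotE a z'))
      = Real.exp (dotE a z) * ((((z.2 : ℝ) + c) * phi ν a)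
          + ∑' w : Zd d, ν w * (w.2 : ℝ) * Real.exp (dotZ a w)) := by
  set F : Zd d → ℝ := fun w =>
    ν w * ((((z.2 : ℝ) + (w.2 : ℝ)) + c) * Real.exp (dotZ a w + dotE a z)) with hFdef
  have hinj : Function.Injective (fun z' : Ed d => jump z z') := by
    intro z' z'' h
    simp only [jump, Prod.mk.injEq] at h
    obtain ⟨h1, h2⟩ := h
    have e1 : z'.1 = z''.1 := by
      funext i
      have := congrFun h1 i
      simp only [Pi.sub_apply] at this
      omega
    have e2 : z'.2 = z''.2 := by omega
    exact Prod.ext e1 e2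
  have hsupp : Function.support F ⊆ Set.range (fun z' : Ed d => jump z z') := by
    intro w hw
    by_contra hnot
    have hge : w.2 < -(z.2 : ℤ) := by
      by_contra hge
      push_neg at hge
      apply hnot
      refine ⟨(z.1 + w.1, (↑z.2 + w.2).toNat), ?_⟩
      refine Prod.ext ?_ ?_
      · show z.1 + w.1 - z.1 = w.1
        simp
      · show ((↑z.2 + w.2).toNat : ℤ) - ↑z.2 = w.2
        rw [Int.toNat_of_nonneg (by omega)]; ring
    apply hw
    simp only [hFdef, hvan w hge, zero_mul]
  have hre : ∀ z' : Ed d,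
      ν (jump z z') * (((z'.2 : ℝ) + c) * Real.exp (dotE a z')) = F (jump z z') := by
    intro z'
    simp only [hFdef, jump]
    have h1 : ((((z'.2 : ℤ) - (z.2 : ℤ)) : ℤ) : ℝ) = (z'.2 : ℝ) - (z.2 : ℝ) := by push_cast; ring
    have h2 : dotZ a (z'.1 - z.1, (z'.2 : ℤ) - (z.2 : ℤ)) + dotE a z = dotE a z' := by
      simp only [dotZ, dotE, Pi.sub_apply]
      push_cast
      simp only [mul_sub]
      rw [Finset.sum_sub_distrib]
      ring
    rw [h1, h2]
    ring_nf
  calc ∑' z' : Ed d, ν (jump z z') * (((z'.2 : ℝ) + c) * Real.exp (dotE a z'))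
      = ∑' z' : Ed d, F (jump z z') := tsum_congr hre
  _ = ∑' w : Zd d, F w := hinj.tsum_eq hsupp
  _ = Real.exp (dotE a z) * ((((z.2 : ℝ) + c) * phi ν a)
        + ∑' w : Zd d, ν w * (w.2 : ℝ) * Real.exp (dotZ a w)) := by
    have hsplit : ∀ w : Zd d, F w
        = (((z.2 : ℝ) + c) * Real.exp (dotE a z)) * (ν w * Real.exp (dotZ a w))
          + Real.exp (dotE a z) * (ν w * (w.2 : ℝ) * Real.exp (dotZ a w)) := by
      intro w
      simp only [hFdef, Real.exp_add]
      ring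
    rw [tsum_congr hsplit, Summable.tsum_add ((h3 a).mul_left _)
      ((summable_moment h3 hpos a).mul_left _), tsum_mul_left, tsum_mul_left, phi]
    ring

/-- under (H0) and (H3), if `φ(a) = t`, `(∂φ/∂β)(a) = 0` and
`φ₀(a) < t`, then `h(x,y) = (y + c) e^{a·(x,y)}` with
`c = (∂φ₀/∂β)(a)/(t − φ₀(a))` is `t`-harmonic for `P`. -/
theorem h_second_case_harmonic {d : ℕ} (μ μ₀ : Zd d → ℝ)
    (hμ : IsMeasure μ) (hμ₀ : IsMeasure μ₀)
    (h0 : H0 μ μ₀) (h3 : H3 μ) (h3' : H3 μ₀)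
    (t : ℝ) (ht : 0 < t) (a : Rd d)
    (hphia : phi μ a = t) (hder : dBeta (phi μ) a = 0) (hphi0 : phi μ₀ a < t) :
    ∀ z : Ed d,
      ∑' z' : Ed d, ker μ μ₀ z z' *
          (((z'.2 : ℝ) + dBeta (phi μ₀) a / (t - phi μ₀ a)) * Real.exp (dotE a z'))
        = t * (((z.2 : ℝ) + dBeta (phi μ₀) a / (t - phi μ₀ a)) * Real.exp (dotE a z)) := by
  intro z
  set c := dBeta (phi μ₀) a / (t - phi μ₀ a) with hc
  by_cases hz : z.2 = 0
  · have hker : ∀ z', ker μ μ₀ z z' = μ₀ (jump z z') := fun z' => if_pos hz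
    have hvan : ∀ w : Zd d, w.2 < -(z.2 : ℤ) → μ₀ w = 0 := by
      intro w hw
      apply h0.2
      omega
    rw [tsum_congr (fun z' => by rw [hker]), tsum_shift hμ₀.1 h3' a c z hvan,
      ← dBeta_phi h3' hμ₀.1 a]
    have hz' : (z.2 : ℝ) = 0 := by rw [hz]; norm_num
    have htne : t - phi μ₀ a ≠ 0 := by linarith
    have hM : dBeta (phi μ₀) a = c * (t - phi μ₀ a) := by
      rw [hc]; field_simp
    rw [hz', hM]
    ring
  · have hker : ∀ z', ker μ μ₀ z z' = μ (jump z z') := fun z' => if_neg hz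
    have hvan : ∀ w : Zd d, w.2 < -(z.2 : ℤ) → μ w = 0 := by
      intro w hw
      apply h0.1
      omega
    rw [tsum_congr (fun z' => by rw [hker]), tsum_shift hμ.1 h3 a c z hvan,
      ← dBeta_phi h3 hμ.1 a, hder, hphia]
    ring

end RWHalfspace
end
end
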